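/- arXiv:1903.06857 — 3 statements merged into one kernel-verified Lean document; each statement's English description precedes it below -/
import Mathlib

section
/- Let H be a complex Hilbert space and let C, T : H → H be bounded linear operators with ‖C‖ ≤ 1 (i.e., C is a contraction). Then w(TC + C*T) ≤ 2 w(T), where C* is the adjoint of C. -/
noncomputable def numRadius {H : Type*} [NormedAddCommGroup H] [InnerProductSpace ℂ H]
    (T : H →L[ℂ] H) : ℝ :=
  sSup {r : ℝ | ∃ x : H, ‖x‖ = 1 ∧ r = ‖(inner ℂ (T x) x : ℂ)‖}

lemma numRadius_nonneg {H : Type*} [NormedAddCommGroup H] [InnerProductSpace ℂ H]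
    (T : H →L[ℂ] H) : 0 ≤ numRadius T := by
  apply Real.sSup_nonneg
  rintro r ⟨x, -, rfl⟩
  positivity

lemma numRadius_bddAbove {H : Type*} [NormedAddCommGroup H] [InnerProductSpace ℂ H]
    (T : H →L[ℂ] H) :
    BddAbove {r : ℝ | ∃ x : H, ‖x‖ = 1 ∧ r = ‖(inner ℂ (T x) x : ℂ)‖} := by
  refine ⟨‖T‖, ?_⟩
  rintro r ⟨x, hx, rfl⟩
  calc ‖(inner ℂ (T x) x : ℂ)‖ ≤ ‖T x‖ * ‖x‖ := norm_inner_le_norm _ _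
    _ ≤ ‖T‖ * ‖x‖ * ‖x‖ := by
        have := T.le_opNorm x
        nlinarith [norm_nonneg x]
    _ = ‖T‖ := by rw [hx]; ring

lemma inner_le_numRadius {H : Type*} [NormedAddCommGroup H] [InnerProductSpace ℂ H]
    (T : H →L[ℂ] H) (y : H) :
    ‖(inner ℂ (T y) y : ℂ)‖ ≤ numRadius T * ‖y‖ ^ 2 := by
  rcases eq_or_ne y 0 with rfl | hy
  · simp
  · have hny : (0:ℝ) < ‖y‖ := norm_pos_iff.mpr hy
    set x := (‖y‖⁻¹ : ℂ) • y with hxdef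
    have hx : ‖x‖ = 1 := by
      rw [hxdef, norm_smul]
      simp [norm_inv, hny.ne']
    have hmem : ‖(inner ℂ (T x) x : ℂ)‖ ∈
        {r : ℝ | ∃ x : H, ‖x‖ = 1 ∧ r = ‖(inner ℂ (T x) x : ℂ)‖} := ⟨x, hx, rfl⟩
    have hle : ‖(inner ℂ (T x) x : ℂ)‖ ≤ numRadius T :=
      le_csSup (numRadius_bddAbove T) hmem
    have hcalc : (inner ℂ (T x) x : ℂ) = (‖y‖⁻¹ : ℂ)^2 * inner ℂ (T y) y := by
      rw [hxdef]
      simp only [map_smul, inner_smul_left, inner_smul_right, map_inv₀,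
        Complex.conj_ofReal]
      ring
    rw [hcalc] at hle
    rw [norm_mul] at hle
    have h2 : ‖((‖y‖⁻¹ : ℂ))^2‖ = (‖y‖^2)⁻¹ := by
      rw [norm_pow]
      simp [norm_inv]
    rw [h2] at hle
    have := mul_le_mul_of_nonneg_right hle (by positivity : (0:ℝ) ≤ ‖y‖^2)
    calc ‖(inner ℂ (T y) y : ℂ)‖ = (‖y‖^2)⁻¹ * ‖(inner ℂ (T y) y : ℂ)‖ * ‖y‖^2 := by
          field_simp
      _ ≤ numRadius T * ‖y‖ ^ 2 := this

theorem numRadius_contraction_ineq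
    {H : Type*} [NormedAddCommGroup H] [InnerProductSpace ℂ H] [CompleteSpace H]
    (C T : H →L[ℂ] H) (hC : ‖C‖ ≤ 1) :
    numRadius (T.comp C + (ContinuousLinearMap.adjoint C).comp T) ≤ 2 * numRadius T := by
  apply Real.sSup_le
  · rintro r ⟨x, hx, rfl⟩
    set u := C x with hu
    have hun : ‖u‖ ≤ 1 := by
      calc ‖u‖ ≤ ‖C‖ * ‖x‖ := C.le_opNorm x
        _ ≤ 1 := by rw [hx]; simpa using hC
    have hA : (inner ℂ ((T.comp C + (ContinuousLinearMap.adjoint C).comp T) x) x : ℂ)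
        = inner ℂ (T u) x + inner ℂ (T x) u := by
      simp only [ContinuousLinearMap.add_apply, ContinuousLinearMap.comp_apply,
        inner_add_left]
      rw [ContinuousLinearMap.adjoint_inner_left]
    -- polarization-type identity
    have hpol : (2 : ℂ) * (inner ℂ (T u) x + inner ℂ (T x) u)
        = inner ℂ (T (u + x)) (u + x) - inner ℂ (T (u - x)) (u - x) := by
      simp only [map_add, map_sub, inner_add_left, inner_add_right, inner_sub_left,
        inner_sub_right]
      ring
    have hb1 : ‖(inner ℂ (T (u + x)) (u + x) : ℂ)‖ ≤ numRadius T * ‖u + x‖ ^ 2 :=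
      inner_le_numRadius T _
    have hb2 : ‖(inner ℂ (T (u - x)) (u - x) : ℂ)‖ ≤ numRadius T * ‖u - x‖ ^ 2 :=
      inner_le_numRadius T _
    have hpar : ‖u + x‖ ^ 2 + ‖u - x‖ ^ 2 ≤ 4 := by
      have := parallelogram_law_with_norm ℂ u x
      nlinarith [norm_nonneg u, hx]
    have hnn := numRadius_nonneg T
    have key : 2 * ‖(inner ℂ ((T.comp C + (ContinuousLinearMap.adjoint C).comp T) x) x : ℂ)‖
        ≤ numRadius T * 4 := by
      calc 2 * ‖(inner ℂ ((T.comp C + (ContinuousLinearMap.adjoint C).comp T) x) x : ℂ)‖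
          = ‖(2:ℂ) * (inner ℂ (T u) x + inner ℂ (T x) u)‖ := by
            rw [hA, norm_mul]; norm_num
        _ = ‖(inner ℂ (T (u + x)) (u + x) : ℂ) - inner ℂ (T (u - x)) (u - x)‖ := by rw [hpol]
        _ ≤ ‖(inner ℂ (T (u + x)) (u + x) : ℂ)‖ + ‖(inner ℂ (T (u - x)) (u - x) : ℂ)‖ :=
            norm_sub_le _ _
        _ ≤ numRadius T * ‖u + x‖ ^ 2 + numRadius T * ‖u - x‖ ^ 2 := add_le_add hb1 hb2
        _ = numRadius T * (‖u + x‖ ^ 2 + ‖u - x‖ ^ 2) := by ring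
        _ ≤ numRadius T * 4 := by nlinarith
    linarith
  · have := numRadius_nonneg T
    linarith
end

section
/- Let H₁ and H₂ be complex Hilbert spaces, X : H₂ → H₁ and Y : H₁ → H₂ bounded linear operators, and set S = X*X + YY* (an operator on H₂). Then w(XY) ≤ (1/4)·√(‖S‖² + 4 w(YX)² + 2 w(YXS + S(YX))). -/
section Aux

open ContinuousLinearMap

variable {H : Type*} [NormedAddCommGroup H] [InnerProductSpace ℂ H] [CompleteSpace H]

local notation "⟪" x ", " y "⟫" => @inner ℂ _ _ x y

lemma numRadius_nonneg_s10 (M : H →L[ℂ] H) : 0 ≤ numRadius M :=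
  Real.sSup_nonneg (by rintro r ⟨x, hx, rfl⟩; positivity)

lemma inner_le_numRadius_s10 (M : H →L[ℂ] H) {x : H} (hx : ‖x‖ = 1) :
    ‖(⟪M x, x⟫ : ℂ)‖ ≤ numRadius M := by
  apply le_csSup
  · refine ⟨‖M‖, ?_⟩
    rintro r ⟨y, hy, rfl⟩
    calc ‖(⟪M y, y⟫ : ℂ)‖ ≤ ‖M y‖ * ‖y‖ := norm_inner_le_norm _ _
    _ ≤ ‖M‖ * ‖y‖ * ‖y‖ := by
        have := M.le_opNorm y
        nlinarith [norm_nonneg y]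
    _ = ‖M‖ := by rw [hy]; ring
  · exact ⟨x, hx, rfl⟩

lemma selfAdjoint_norm_le (D : H →L[ℂ] H) (hD : ContinuousLinearMap.adjoint D = D)
    {r : ℝ} (hr : 0 ≤ r) (h : ∀ x : H, ‖x‖ = 1 → ‖(⟪D x, x⟫ : ℂ)‖ ≤ r) : ‖D‖ ≤ r := by
  have hq : ∀ u : H, ‖(⟪D u, u⟫ : ℂ)‖ ≤ r * ‖u‖ ^ 2 := by
    intro u
    rcases eq_or_ne u 0 with rfl | hu
    · simp
    · have hnu : ‖u‖ ≠ 0 := norm_ne_zero_iff.mpr hu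
      have h1 : ‖((‖u‖⁻¹ : ℝ) : ℂ) • u‖ = 1 := by
        rw [norm_smul, Complex.norm_real, Real.norm_eq_abs, abs_of_nonneg (by positivity)]
        field_simp
      have h2 := h _ h1
      rw [map_smul, inner_smul_left, inner_smul_right] at h2
      rw [Complex.conj_ofReal, ← mul_assoc, ← Complex.ofReal_mul, norm_mul,
        Complex.norm_real, Real.norm_eq_abs, abs_of_nonneg (by positivity)] at h2
      have h3 : ‖u‖⁻¹ * ‖u‖⁻¹ * ‖(⟪D u, u⟫ : ℂ)‖ ≤ r := h2
      have h5 := mul_le_mul_of_nonneg_right h3 (sq_nonneg ‖u‖)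
      have h6 : ‖u‖⁻¹ * ‖u‖⁻¹ * ‖(⟪D u, u⟫ : ℂ)‖ * ‖u‖ ^ 2
          = (‖u‖⁻¹ * ‖u‖) * (‖u‖⁻¹ * ‖u‖) * ‖(⟪D u, u⟫ : ℂ)‖ := by ring
      rw [inv_mul_cancel₀ hnu] at h6
      simp only [one_mul, mul_one] at h6
      linarith [h6 ▸ h5]
  have key : ∀ x y : H, (⟪D y, x⟫ : ℂ).re = (⟪D x, y⟫ : ℂ).re := by
    intro x y
    have h1 : (⟪D y, x⟫ : ℂ) = ⟪y, D x⟫ := by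
      conv_lhs => rw [← hD]
      exact ContinuousLinearMap.adjoint_inner_left D x y
    rw [h1, ← inner_conj_symm]
    exact Complex.conj_re _
  have hre : ∀ x y : H, ‖x‖ ≤ 1 → ‖y‖ ≤ 1 → (⟪D x, y⟫ : ℂ).re ≤ r := by
    intro x y hx hy
    have h4 : 4 * (⟪D x, y⟫ : ℂ).re
        = (⟪D (x + y), x + y⟫ : ℂ).re - (⟪D (x - y), x - y⟫ : ℂ).re := by
      simp only [map_add, map_sub, inner_add_left, inner_add_right, inner_sub_left,
        inner_sub_right, Complex.add_re, Complex.sub_re]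
      linarith [key x y]
    have e1 : (⟪D (x + y), x + y⟫ : ℂ).re ≤ r * ‖x + y‖ ^ 2 :=
      le_trans (Complex.re_le_norm _) (hq (x + y))
    have e2 : -(r * ‖x - y‖ ^ 2) ≤ (⟪D (x - y), x - y⟫ : ℂ).re := by
      have h7 : -(⟪D (x - y), x - y⟫ : ℂ).re ≤ ‖(⟪D (x - y), x - y⟫ : ℂ)‖ := by
        calc -(⟪D (x - y), x - y⟫ : ℂ).re ≤ |(⟪D (x - y), x - y⟫ : ℂ).re| := neg_le_abs _
        _ ≤ ‖(⟪D (x - y), x - y⟫ : ℂ)‖ := Complex.abs_re_le_norm _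
      linarith [hq (x - y)]
    have hpar := parallelogram_law_with_norm ℂ x y
    have p1 : ‖x + y‖ ^ 2 = ‖x + y‖ * ‖x + y‖ := sq ‖x + y‖
    have p2 : ‖x - y‖ ^ 2 = ‖x - y‖ * ‖x - y‖ := sq ‖x - y‖
    have s2 : ‖x‖ * ‖x‖ + ‖y‖ * ‖y‖ ≤ 2 := by
      nlinarith [norm_nonneg x, norm_nonneg y]
    have h8 : r * ‖x + y‖ ^ 2 + r * ‖x - y‖ ^ 2 ≤ 4 * r := by
      rw [p1, p2]
      nlinarith [hpar, s2, hr]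
    linarith
  have hDx : ∀ x : H, ‖x‖ = 1 → ‖D x‖ ≤ r := by
    intro x hx
    rcases eq_or_ne (D x) 0 with h0 | h0
    · simp [h0, hr]
    · have hn : (0:ℝ) < ‖D x‖ := norm_pos_iff.mpr h0
      set y : H := ((‖D x‖⁻¹ : ℝ) : ℂ) • D x with hy
      have hy1 : ‖y‖ ≤ 1 := by
        rw [hy, norm_smul, Complex.norm_real, Real.norm_eq_abs, abs_of_nonneg (by positivity)]
        rw [inv_mul_cancel₀ (ne_of_gt hn)]
      have him : (⟪D x, D x⟫ : ℂ).im = 0 := by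
        rw [← RCLike.im_to_complex]; exact inner_self_im _
      have hre2 : (⟪D x, D x⟫ : ℂ).re = ‖D x‖ ^ 2 := by
        rw [← RCLike.re_to_complex]; exact inner_self_eq_norm_sq _
      have h6 : (⟪D x, y⟫ : ℂ).re = ‖D x‖ := by
        rw [hy, inner_smul_right, Complex.mul_re, Complex.ofReal_re, Complex.ofReal_im,
          him, hre2, mul_zero, sub_zero, sq, ← mul_assoc, inv_mul_cancel₀ (ne_of_gt hn), one_mul]
      have h7 := hre x y (le_of_eq hx) hy1
      linarith [h6 ▸ h7]
  refine D.opNorm_le_bound hr fun x => ?_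
  rcases eq_or_ne x 0 with rfl | hx0
  · simp
  · have hnx : (0:ℝ) < ‖x‖ := norm_pos_iff.mpr hx0
    have h1 : ‖((‖x‖⁻¹ : ℝ) : ℂ) • x‖ = 1 := by
      rw [norm_smul, Complex.norm_real, Real.norm_eq_abs, abs_of_nonneg (by positivity)]
      field_simp
    have h2 := hDx _ h1
    rw [map_smul, norm_smul, Complex.norm_real, Real.norm_eq_abs,
      abs_of_nonneg (by positivity)] at h2
    calc ‖D x‖ = ‖x‖ * (‖x‖⁻¹ * ‖D x‖) := by field_simp
    _ ≤ ‖x‖ * r := by nlinarith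
    _ = r * ‖x‖ := mul_comm _ _

lemma norm_smul_add_smul_adjoint_le (M : H →L[ℂ] H) {z : ℂ} (hz : ‖z‖ = 1) :
    ‖z • M + (starRingEnd ℂ z) • ContinuousLinearMap.adjoint M‖ ≤ 2 * numRadius M := by
  have hadj : ContinuousLinearMap.adjoint
        (z • M + (starRingEnd ℂ z) • ContinuousLinearMap.adjoint M)
      = z • M + (starRingEnd ℂ z) • ContinuousLinearMap.adjoint M := by
    rw [map_add, map_smulₛₗ, map_smulₛₗ, adjoint_adjoint, Complex.conj_conj, add_comm]
  refine selfAdjoint_norm_le _ hadj (by linarith [numRadius_nonneg_s10 M]) ?_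
  intro x hx
  have he : (⟪(z • M + (starRingEnd ℂ z) • ContinuousLinearMap.adjoint M) x, x⟫ : ℂ)
      = (starRingEnd ℂ) z * (⟪M x, x⟫ : ℂ) + z * (starRingEnd ℂ) (⟪M x, x⟫ : ℂ) := by
    simp only [ContinuousLinearMap.add_apply, ContinuousLinearMap.smul_apply, inner_add_left,
      inner_smul_left]
    rw [Complex.conj_conj, adjoint_inner_left, ← inner_conj_symm, Complex.conj_conj]
  rw [he]
  have h1 := inner_le_numRadius_s10 M hx
  calc ‖(starRingEnd ℂ) z * (⟪M x, x⟫ : ℂ) + z * (starRingEnd ℂ) (⟪M x, x⟫ : ℂ)‖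
      ≤ ‖(starRingEnd ℂ) z * (⟪M x, x⟫ : ℂ)‖ + ‖z * (starRingEnd ℂ) (⟪M x, x⟫ : ℂ)‖ :=
        norm_add_le _ _
  _ = ‖(⟪M x, x⟫ : ℂ)‖ + ‖(⟪M x, x⟫ : ℂ)‖ := by
        rw [norm_mul, norm_mul, RCLike.norm_conj, RCLike.norm_conj, hz]; ring
  _ ≤ 2 * numRadius M := by linarith

end Aux

set_option maxHeartbeats 2000000 in
theorem numRadius_comp_le
    {H₁ H₂ : Type*} [NormedAddCommGroup H₁] [InnerProductSpace ℂ H₁]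
    [NormedAddCommGroup H₂] [InnerProductSpace ℂ H₂]
    [CompleteSpace H₁] [CompleteSpace H₂]
    (X : H₂ →L[ℂ] H₁) (Y : H₁ →L[ℂ] H₂)
    (S : H₂ →L[ℂ] H₂)
    (hS : S = (ContinuousLinearMap.adjoint X).comp X + Y.comp (ContinuousLinearMap.adjoint Y)) :
    numRadius (X.comp Y) ≤ (1 / 4 : ℝ) *
      Real.sqrt (‖S‖ ^ 2 + 4 * (numRadius (Y.comp X)) ^ 2
        + 2 * numRadius ((Y.comp X).comp S + S.comp (Y.comp X))) := by
  classical
  open ContinuousLinearMap in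
  set W : H₂ →L[ℂ] H₂ := Y.comp X with hW
  set K : H₂ →L[ℂ] H₂ := (Y.comp X).comp S + S.comp (Y.comp X) with hK
  set R : ℝ := ‖S‖ ^ 2 + 4 * (numRadius (Y.comp X)) ^ 2 + 2 * numRadius K with hR
  have hwW := numRadius_nonneg_s10 (Y.comp X)
  have hwK := numRadius_nonneg_s10 K
  have hRnn : 0 ≤ R := by
    rw [hR]; positivity
  have hSadj : ContinuousLinearMap.adjoint S = S := by
    rw [hS, map_add, adjoint_comp, adjoint_comp, adjoint_adjoint, adjoint_adjoint]
  have main : ∀ x : H₁, ‖x‖ = 1 → ‖(inner ℂ ((X.comp Y) x) x : ℂ)‖ ≤ (1 / 4 : ℝ) * Real.sqrt R := by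
    intro x hx
    set a : ℂ := inner ℂ ((ContinuousLinearMap.adjoint X) x) (Y x) with ha
    have hnormaa : ‖(inner ℂ ((X.comp Y) x) x : ℂ)‖ = ‖a‖ := by
      rw [ha, adjoint_inner_left, ← inner_conj_symm, RCLike.norm_conj]
      rfl
    obtain ⟨z, hz1, hza⟩ : ∃ z : ℂ, ‖z‖ = 1 ∧ z * a = (‖a‖ : ℂ) := by
      rcases eq_or_ne a 0 with h0 | h0
      · exact ⟨1, by simp, by simp [h0]⟩
      · refine ⟨(‖a‖ : ℂ) / a, ?_, ?_⟩
        · rw [norm_div, Complex.norm_real, Real.norm_eq_abs, abs_norm,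
            div_self (norm_ne_zero_iff.mpr h0)]
        · field_simp
    have hzz : (starRingEnd ℂ) z * z = 1 := by
      rw [mul_comm, Complex.mul_conj, Complex.normSq_eq_norm_sq, hz1]
      norm_num
    set A : H₁ →L[ℂ] H₂ := (ContinuousLinearMap.adjoint X) + z • Y with hA
    set C : H₂ →L[ℂ] H₂ := z • W + (starRingEnd ℂ z) • (ContinuousLinearMap.adjoint W) with hC
    set B : H₂ →L[ℂ] H₂ := S + C with hB
    have step1 : 4 * ‖a‖ ≤ ‖A x‖ ^ 2 := by
      have hAx : A x = (ContinuousLinearMap.adjoint X) x + z • Y x := by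
        rw [hA]; simp
      have expand : ‖A x‖ ^ 2
          = ‖(ContinuousLinearMap.adjoint X) x‖ ^ 2 + 2 * ‖a‖ + ‖Y x‖ ^ 2 := by
        rw [hAx, norm_add_sq (𝕜 := ℂ), inner_smul_right, ← ha, hza, norm_smul, hz1, one_mul]
        norm_num
      have cs : ‖a‖ ≤ ‖(ContinuousLinearMap.adjoint X) x‖ * ‖Y x‖ := by
        rw [ha]; exact norm_inner_le_norm _ _
      nlinarith [expand, cs, sq_nonneg (‖(ContinuousLinearMap.adjoint X) x‖ - ‖Y x‖)]
    have hAadj : ContinuousLinearMap.adjoint A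
        = X + (starRingEnd ℂ z) • (ContinuousLinearMap.adjoint Y) := by
      rw [hA, map_add, map_smulₛₗ, adjoint_adjoint]
    have hcomp : A.comp (ContinuousLinearMap.adjoint A) = B := by
      rw [hAadj, hA, hB, hC, hW, hS]
      ext v
      simp only [ContinuousLinearMap.coe_comp', Function.comp_apply,
        ContinuousLinearMap.add_apply, ContinuousLinearMap.smul_apply, map_add, map_smul,
        ContinuousLinearMap.coe_smul', Pi.smul_apply, adjoint_comp, smul_add, smul_smul, hzz,
        one_smul]
      module
    have step2 : ‖A x‖ ^ 2 ≤ ‖B‖ := by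
      have hnA : ‖ContinuousLinearMap.adjoint A‖ = ‖A‖ :=
        (ContinuousLinearMap.adjoint :
          (H₁ →L[ℂ] H₂) ≃ₗᵢ⋆[ℂ] (H₂ →L[ℂ] H₁)).norm_map A
      have h := ContinuousLinearMap.norm_adjoint_comp_self (ContinuousLinearMap.adjoint A)
      rw [adjoint_adjoint, hcomp, hnA] at h
      have hle : ‖A x‖ ≤ ‖A‖ := by
        have := A.le_opNorm x
        rw [hx, mul_one] at this
        exact this
      calc ‖A x‖ ^ 2 ≤ ‖A‖ * ‖A‖ := by nlinarith [norm_nonneg (A x), norm_nonneg A]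
      _ = ‖B‖ := h.symm
    have hCadj : ContinuousLinearMap.adjoint C = C := by
      rw [hC, map_add, map_smulₛₗ, map_smulₛₗ, adjoint_adjoint, Complex.conj_conj, add_comm]
    have hBadj : ContinuousLinearMap.adjoint B = B := by
      rw [hB, map_add, hSadj, hCadj]
    have hKadj : S.comp C + C.comp S
        = z • K + (starRingEnd ℂ z) • (ContinuousLinearMap.adjoint K) := by
      rw [hC, hK, hW]
      ext v
      simp only [map_add, adjoint_comp, ContinuousLinearMap.coe_comp', Function.comp_apply,
        ContinuousLinearMap.add_apply, ContinuousLinearMap.smul_apply, map_smul,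
        ContinuousLinearMap.coe_smul', Pi.smul_apply, smul_add, hSadj]
      module
    have hCle : ‖C‖ ≤ 2 * numRadius W := by
      rw [hC]
      exact norm_smul_add_smul_adjoint_le W hz1
    have hSCle : ‖S.comp C + C.comp S‖ ≤ 2 * numRadius K := by
      rw [hKadj]
      exact norm_smul_add_smul_adjoint_le K hz1
    have hBB : B.comp B = S.comp S + (S.comp C + C.comp S) + C.comp C := by
      rw [hB]
      simp only [ContinuousLinearMap.add_comp, ContinuousLinearMap.comp_add]
      abel
    have hBsq : ‖B‖ ^ 2 = ‖B.comp B‖ := by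
      have h := ContinuousLinearMap.norm_adjoint_comp_self B
      rw [hBadj] at h
      rw [h]; ring
    have step3 : ‖B‖ ^ 2 ≤ R := by
      rw [hBsq]
      have t1 : ‖B.comp B‖ ≤ ‖S.comp S‖ + ‖S.comp C + C.comp S‖ + ‖C.comp C‖ := by
        rw [hBB]
        exact le_trans (norm_add_le _ _) (by gcongr; exact norm_add_le _ _)
      have t2 : ‖S.comp S‖ ≤ ‖S‖ * ‖S‖ := ContinuousLinearMap.opNorm_comp_le _ _
      have t3 : ‖C.comp C‖ ≤ ‖C‖ * ‖C‖ := ContinuousLinearMap.opNorm_comp_le _ _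
      have t4 : ‖C‖ * ‖C‖ ≤ (2 * numRadius W) * (2 * numRadius W) := by
        nlinarith [norm_nonneg C]
      rw [hR]
      have hWW : numRadius W = numRadius (Y.comp X) := by rw [hW]
      nlinarith [hWW]
    have step4 : 4 * ‖a‖ ≤ Real.sqrt R := by
      have hBR : ‖B‖ ≤ Real.sqrt R := Real.le_sqrt_of_sq_le step3
      linarith [step1.trans step2]
    rw [hnormaa]
    linarith [step4, Real.sqrt_nonneg R]
  apply Real.sSup_le
  · rintro r ⟨x, hx, rfl⟩
    exact main x hx
  · positivity
end

section
/- Let H₁ and H₂ be complex Hilbert spaces, X : H₂ → H₁ and Y : H₁ → H₂ bounded linear operators, and let T be the off-diagonal operator matrix on H₁ ⊕ H₂ given by T(x₁, x₂) = (X x₂, Y x₁). Set P = XX* + Y*Y (an operator on H₁). Then w(T)⁴ ≥ (1/16)‖P‖² + (1/4)c(XY)² + (1/8)m((XY)P + P(XY)). -/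
noncomputable def crawford {H : Type*} [NormedAddCommGroup H] [InnerProductSpace ℂ H]
    (T : H →L[ℂ] H) : ℝ :=
  sInf {r : ℝ | ∃ x : H, ‖x‖ = 1 ∧ r = ‖(inner ℂ (T x) x : ℂ)‖}

noncomputable def reOp {H : Type*} [NormedAddCommGroup H] [InnerProductSpace ℂ H]
    [CompleteSpace H] (A : H →L[ℂ] H) : H →L[ℂ] H :=
  (2 : ℂ)⁻¹ • (A + ContinuousLinearMap.adjoint A)

noncomputable def cNum {H : Type*} [NormedAddCommGroup H] [InnerProductSpace ℂ H]
    [CompleteSpace H] (T : H →L[ℂ] H) : ℝ :=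
  ⨅ θ : ℝ, sInf {r : ℝ | ∃ x : H, ‖x‖ = 1 ∧ r = ‖reOp (Complex.exp (θ * Complex.I) • T) x‖}

lemma my_adjoint_smul {H : Type*} [NormedAddCommGroup H] [InnerProductSpace ℂ H]
    [CompleteSpace H] (c : ℂ) (S : H →L[ℂ] H) :
    ContinuousLinearMap.adjoint (c • S) = (starRingEnd ℂ) c • ContinuousLinearMap.adjoint S := by
  rw [← ContinuousLinearMap.star_eq_adjoint, ← ContinuousLinearMap.star_eq_adjoint, star_smul]
  rfl

lemma my_opNorm_le {H : Type*} [NormedAddCommGroup H] [InnerProductSpace ℂ H]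
    [CompleteSpace H] (B : H →L[ℂ] H) (hB : ContinuousLinearMap.adjoint B = B)
    {M : ℝ} (hM : 0 ≤ M) (h : ∀ u : H, ‖u‖ = 1 → ‖(inner ℂ (B u) u : ℂ)‖ ≤ M) :
    ‖B‖ ≤ M := by
  have hgen : ∀ v : H, ‖(inner ℂ (B v) v : ℂ)‖ ≤ M * ‖v‖ ^ 2 := by
    intro v
    rcases eq_or_ne v 0 with rfl | hv
    · simp
    · have hnv : (0:ℝ) < ‖v‖ := norm_pos_iff.mpr hv
      set c : ℂ := ((‖v‖⁻¹ : ℝ) : ℂ) with hc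
      have hu : ‖c • v‖ = 1 := by
        simp [norm_smul, hc, abs_of_nonneg (inv_nonneg.mpr hnv.le), inv_mul_cancel₀ hnv.ne']
      have h2 := h (c • v) hu
      have hinner : (inner ℂ (B (c • v)) (c • v) : ℂ) = c * c * inner ℂ (B v) v := by
        rw [map_smul, inner_smul_left, inner_smul_right, hc]
        simp only [Complex.conj_ofReal]
        ring
      rw [hinner] at h2
      have hnn : ‖c * c * (inner ℂ (B v) v : ℂ)‖ = (‖v‖⁻¹ * ‖v‖⁻¹) * ‖(inner ℂ (B v) v : ℂ)‖ := by
        rw [norm_mul, norm_mul, hc]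
        simp [abs_of_nonneg (inv_nonneg.mpr hnv.le), mul_assoc]
      rw [hnn] at h2
      have heq : ‖v‖⁻¹ * ‖v‖⁻¹ * ‖(inner ℂ (B v) v : ℂ)‖ * (‖v‖*‖v‖) = ‖(inner ℂ (B v) v : ℂ)‖ := by
        field_simp
      calc ‖(inner ℂ (B v) v : ℂ)‖ = ‖v‖⁻¹ * ‖v‖⁻¹ * ‖(inner ℂ (B v) v : ℂ)‖ * (‖v‖*‖v‖) := heq.symm
        _ ≤ M * (‖v‖*‖v‖) := mul_le_mul_of_nonneg_right h2 (by positivity)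
        _ = M * ‖v‖^2 := by ring
  refine B.opNorm_le_bound hM fun x => ?_
  rcases eq_or_ne (B x) 0 with hBx | hBx
  · rw [hBx]; simp; positivity
  have hx : x ≠ 0 := by rintro rfl; simp at hBx
  have hnx : (0:ℝ) < ‖x‖ := norm_pos_iff.mpr hx
  have hnBx : (0:ℝ) < ‖B x‖ := norm_pos_iff.mpr hBx
  set y : H := ((‖x‖ / ‖B x‖ : ℝ) : ℂ) • B x with hy
  have hyn : ‖y‖ = ‖x‖ := by
    rw [hy, norm_smul]
    simp [abs_of_nonneg (div_nonneg hnx.le hnBx.le)]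
    field_simp
  have hrei : (inner ℂ (B x) y : ℂ).re = ‖x‖ * ‖B x‖ := by
    have h5 : (inner ℂ (B x) (B x) : ℂ).re = ‖B x‖ * ‖B x‖ := by
      simpa using inner_self_eq_norm_mul_norm (𝕜 := ℂ) (B x)
    rw [hy, inner_smul_right, Complex.re_ofReal_mul, h5]
    field_simp
  have hsym : ∀ u v : H, (inner ℂ (B v) u : ℂ).re = (inner ℂ (B u) v : ℂ).re := by
    intro u v
    have h1 := ContinuousLinearMap.adjoint_inner_left B u v
    rw [hB] at h1
    rw [h1, ← inner_conj_symm v (B u), Complex.conj_re]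
  have key : 4 * (inner ℂ (B x) y : ℂ).re
      = (inner ℂ (B (x+y)) (x+y) : ℂ).re - (inner ℂ (B (x-y)) (x-y) : ℂ).re := by
    have e1 : (inner ℂ (B (x+y)) (x+y) : ℂ)
        = inner ℂ (B x) x + inner ℂ (B x) y + inner ℂ (B y) x + inner ℂ (B y) y := by
      rw [map_add, inner_add_left, inner_add_right, inner_add_right]; ring
    have e2 : (inner ℂ (B (x-y)) (x-y) : ℂ)
        = inner ℂ (B x) x - inner ℂ (B x) y - inner ℂ (B y) x + inner ℂ (B y) y := by
      rw [map_sub, inner_sub_left, inner_sub_right, inner_sub_right]; ring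
    rw [e1, e2]
    simp only [Complex.add_re, Complex.sub_re]
    rw [hsym x y]
    ring
  have hb1 : (inner ℂ (B (x+y)) (x+y) : ℂ).re ≤ M * ‖x+y‖^2 :=
    le_trans (Complex.re_le_norm _) (hgen _)
  have hb2 : -(inner ℂ (B (x-y)) (x-y) : ℂ).re ≤ M * ‖x-y‖^2 := by
    refine le_trans (neg_le_abs _) (le_trans ?_ (hgen _))
    exact Complex.abs_re_le_norm _
  have hpar := parallelogram_law_with_norm ℂ x y
  have hfin : 4 * (‖x‖ * ‖B x‖) ≤ 4 * (M * ‖x‖^2) := by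
    rw [← hrei]
    calc 4 * (inner ℂ (B x) y : ℂ).re
        ≤ M * ‖x+y‖^2 + M * ‖x-y‖^2 := by rw [key]; linarith
      _ = M * (‖x+y‖*‖x+y‖ + ‖x-y‖*‖x-y‖) := by ring
      _ = M * (2*(‖x‖*‖x‖ + ‖y‖*‖y‖)) := by simp only [← sq]; rw [hpar]
      _ = 4 * (M * ‖x‖^2) := by rw [hyn]; ring
  nlinarith

set_option maxHeartbeats 1000000 in
theorem numRadius_offdiag_pow_four_lower'
    {H₁ H₂ : Type*} [NormedAddCommGroup H₁] [InnerProductSpace ℂ H₁]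
    [NormedAddCommGroup H₂] [InnerProductSpace ℂ H₂]
    [CompleteSpace H₁] [CompleteSpace H₂]
    (X : H₂ →L[ℂ] H₁) (Y : H₁ →L[ℂ] H₂)
    (T : WithLp 2 (H₁ × H₂) →L[ℂ] WithLp 2 (H₁ × H₂))
    (hT : ∀ x : WithLp 2 (H₁ × H₂),
      WithLp.equiv 2 (H₁ × H₂) (T x) =
        (X (WithLp.equiv 2 (H₁ × H₂) x).2, Y (WithLp.equiv 2 (H₁ × H₂) x).1))
    (P : H₁ →L[ℂ] H₁)
    (hP : P = X.comp (ContinuousLinearMap.adjoint X) + (ContinuousLinearMap.adjoint Y).comp Y) :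
    (numRadius T) ^ 4 ≥ (1 / 16 : ℝ) * ‖P‖ ^ 2 + (1 / 4 : ℝ) * (cNum (X.comp Y)) ^ 2
      + (1 / 8 : ℝ) * crawford ((X.comp Y).comp P + P.comp (X.comp Y)) := by
  classical
  set C := X.comp Y with hC
  set Q := C.comp P + P.comp C with hQ
  by_cases hex : ∃ e : H₁, ‖e‖ = 1
  case neg =>
    have htriv : ∀ v : H₁, v = 0 := by
      intro v; by_contra hv
      have hnv : (0:ℝ) < ‖v‖ := norm_pos_iff.mpr hv
      exact hex ⟨((‖v‖⁻¹ : ℝ) : ℂ) • v, by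
        simp [norm_smul, abs_of_nonneg (inv_nonneg.mpr hnv.le), inv_mul_cancel₀ hnv.ne']⟩
    have hPz : P = 0 := by ext v; rw [htriv v]; simp
    have hcN : cNum C = 0 := by
      unfold cNum
      have hemp : ∀ θ : ℝ, {r : ℝ | ∃ x : H₁, ‖x‖ = 1 ∧
          r = ‖reOp (Complex.exp (θ * Complex.I) • C) x‖} = ∅ := by
        intro θ
        rw [Set.eq_empty_iff_forall_notMem]
        rintro r ⟨x, hx, -⟩
        rw [htriv x] at hx; simp at hx
      simp [hemp, Real.sInf_empty]
    have hcr : crawford Q = 0 := by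
      unfold crawford
      have hemp : {r : ℝ | ∃ x : H₁, ‖x‖ = 1 ∧ r = ‖(inner ℂ (Q x) x : ℂ)‖} = ∅ := by
        rw [Set.eq_empty_iff_forall_notMem]
        rintro r ⟨x, hx, -⟩
        rw [htriv x] at hx; simp at hx
      rw [hemp, Real.sInf_empty]
    rw [hcN, hcr, hPz]
    simp
    positivity
  case pos =>
  obtain ⟨e, he⟩ := hex
  -- components of T
  have hT1 : ∀ v : WithLp 2 (H₁ × H₂), (T v).fst = X v.snd := by
    intro v
    have := congrArg Prod.fst (hT v)
    exact this
  have hT2 : ∀ v : WithLp 2 (H₁ × H₂), (T v).snd = Y v.fst := by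
    intro v
    have := congrArg Prod.snd (hT v)
    exact this
  -- components of adjoint T
  have hTa1 : ∀ v : WithLp 2 (H₁ × H₂),
      (ContinuousLinearMap.adjoint T v).fst = ContinuousLinearMap.adjoint Y v.snd := by
    intro v
    apply ext_inner_left ℂ
    intro w
    have h0 := ContinuousLinearMap.adjoint_inner_right T
      ((WithLp.equiv 2 (H₁ × H₂)).symm (w, (0:H₂))) v
    rw [WithLp.prod_inner_apply, WithLp.prod_inner_apply] at h0
    simp only [WithLp.equiv_symm_apply, WithLp.ofLp_toLp, WithLp.ofLp_fst, WithLp.ofLp_snd, WithLp.toLp_fst, WithLp.toLp_snd, hT1, hT2, map_zero,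
      inner_zero_left] at h0
    simpa [ContinuousLinearMap.adjoint_inner_right] using h0
  have hTa2 : ∀ v : WithLp 2 (H₁ × H₂),
      (ContinuousLinearMap.adjoint T v).snd = ContinuousLinearMap.adjoint X v.fst := by
    intro v
    apply ext_inner_left ℂ
    intro w
    have h0 := ContinuousLinearMap.adjoint_inner_right T
      ((WithLp.equiv 2 (H₁ × H₂)).symm ((0:H₁), w)) v
    rw [WithLp.prod_inner_apply, WithLp.prod_inner_apply] at h0
    simp only [WithLp.equiv_symm_apply, WithLp.ofLp_toLp, WithLp.ofLp_fst, WithLp.ofLp_snd, WithLp.toLp_fst, WithLp.toLp_snd, hT1, hT2, map_zero,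
      inner_zero_left] at h0
    simpa [ContinuousLinearMap.adjoint_inner_right] using h0
  -- self-adjointness of P
  have hPadj : ContinuousLinearMap.adjoint P = P := by
    rw [hP, map_add, ContinuousLinearMap.adjoint_comp, ContinuousLinearMap.adjoint_comp,
      ContinuousLinearMap.adjoint_adjoint, ContinuousLinearMap.adjoint_adjoint]
  -- numerical radius facts
  have hbddS : BddAbove {r : ℝ | ∃ x : WithLp 2 (H₁ × H₂), ‖x‖ = 1 ∧
      r = ‖(inner ℂ (T x) x : ℂ)‖} := by
    refine ⟨‖T‖, ?_⟩
    rintro r ⟨x, hx, rfl⟩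
    calc ‖(inner ℂ (T x) x : ℂ)‖ ≤ ‖T x‖ * ‖x‖ := norm_inner_le_norm _ _
      _ ≤ ‖T‖ * ‖x‖ * ‖x‖ := by
          have := T.le_opNorm x
          nlinarith [norm_nonneg x]
      _ = ‖T‖ := by rw [hx]; ring
  have hWel : ∀ z : WithLp 2 (H₁ × H₂), ‖z‖ = 1 →
      ‖(inner ℂ (T z) z : ℂ)‖ ≤ numRadius T := by
    intro z hz
    exact le_csSup hbddS ⟨z, hz, rfl⟩
  have hW0 : 0 ≤ numRadius T := by
    have hzn : ‖(WithLp.equiv 2 (H₁ × H₂)).symm (e, (0:H₂))‖ = 1 := by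
      exact (WithLp.norm_toLp_fst 2 H₁ H₂ e).trans he
    exact le_trans (norm_nonneg _) (hWel _ hzn)
  -- cNum facts
  have hF0 : ∀ θ : ℝ, 0 ≤ sInf {r : ℝ | ∃ x : H₁, ‖x‖ = 1 ∧
      r = ‖reOp (Complex.exp (θ * Complex.I) • C) x‖} := by
    intro θ
    refine le_csInf ⟨_, ⟨e, he, rfl⟩⟩ ?_
    rintro r ⟨x, hx, rfl⟩
    exact norm_nonneg _
  have hcNum0 : 0 ≤ cNum C := le_ciInf hF0
  have hcraw0 : 0 ≤ crawford Q := by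
    refine le_csInf ⟨_, ⟨e, he, rfl⟩⟩ ?_
    rintro r ⟨x, hx, rfl⟩
    exact norm_nonneg _
  -- MAIN per-vector inequality
  have hmain : ∀ x₁ : H₁, ‖x₁‖ = 1 →
      (1/4) * (cNum C)^2 + (1/16) * ‖P x₁‖^2 + (1/8) * crawford Q ≤ (numRadius T)^4 := by
    intro x₁ hx₁
    set q : ℂ := inner ℂ (Q x₁) x₁ with hq
    set b : ℂ := Complex.exp ((Complex.arg q : ℂ) * Complex.I) with hbdef
    set a : ℂ := Complex.exp (((Complex.arg q / 2 : ℝ) : ℂ) * Complex.I) with hadef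
    have hb : a * a = b := by
      rw [hadef, hbdef, ← Complex.exp_add]
      congr 1
      push_cast
      ring
    have ha1 : ‖a‖ = 1 := Complex.norm_exp_ofReal_mul_I _
    have hb1 : ‖b‖ = 1 := Complex.norm_exp_ofReal_mul_I _
    have hane : a ≠ 0 := Complex.exp_ne_zero _
    have haa : a * (starRingEnd ℂ) a = 1 := by
      rw [Complex.mul_conj, Complex.normSq_eq_norm_sq, ha1]; norm_num
    have hbb : b * (starRingEnd ℂ) b = 1 := by
      rw [Complex.mul_conj, Complex.normSq_eq_norm_sq, hb1]; norm_num
    have hconj : (starRingEnd ℂ) a = a⁻¹ :=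
      eq_inv_of_mul_eq_one_left (by rw [mul_comm] at haa; exact haa)
    have h2c : (starRingEnd ℂ) ((2:ℂ)⁻¹) = (2:ℂ)⁻¹ := by
      rw [show ((2:ℂ)) = ((2:ℝ):ℂ) by norm_num, ← Complex.ofReal_inv, Complex.conj_ofReal]
    set A := reOp (a • T) with hA
    have hTsa := my_adjoint_smul a T
    have hA1 : ∀ v : WithLp 2 (H₁ × H₂), (A v).fst
        = (2:ℂ)⁻¹ • (a • X v.snd + (starRingEnd ℂ) a • ContinuousLinearMap.adjoint Y v.snd) := by
      intro v
      rw [hA]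
      simp only [reOp, hTsa, ContinuousLinearMap.smul_apply, ContinuousLinearMap.add_apply,
        WithLp.smul_fst, WithLp.add_fst, hT1, hTa1]
    have hA2 : ∀ v : WithLp 2 (H₁ × H₂), (A v).snd
        = (2:ℂ)⁻¹ • (a • Y v.fst + (starRingEnd ℂ) a • ContinuousLinearMap.adjoint X v.fst) := by
      intro v
      rw [hA]
      simp only [reOp, hTsa, ContinuousLinearMap.smul_apply, ContinuousLinearMap.add_apply,
        WithLp.smul_snd, WithLp.add_snd, hT2, hTa2]
    set z : WithLp 2 (H₁ × H₂) := (WithLp.equiv 2 (H₁ × H₂)).symm (x₁, (0:H₂)) with hz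
    have hz1 : z.fst = x₁ := by simp [hz]
    have hz2 : z.snd = (0:H₂) := by simp [hz]
    have hzn : ‖z‖ = 1 := by rw [hz]; exact (WithLp.norm_toLp_fst 2 H₁ H₂ x₁).trans hx₁
    have hAz1 : (A z).fst = 0 := by rw [hA1 z, hz2]; simp
    have hAz2 : (A z).snd
        = (2:ℂ)⁻¹ • (a • Y x₁ + (starRingEnd ℂ) a • ContinuousLinearMap.adjoint X x₁) := by
      rw [hA2 z, hz1]
    set R := reOp (b • C) with hR
    have hCa := my_adjoint_smul b C
    have hRapp : R x₁
        = (2:ℂ)⁻¹ • (b • C x₁ + (starRingEnd ℂ) b • ContinuousLinearMap.adjoint C x₁) := by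
      rw [hR]
      simp only [reOp, hCa, ContinuousLinearMap.smul_apply, ContinuousLinearMap.add_apply]
    have hCadj : ContinuousLinearMap.adjoint C
        = (ContinuousLinearMap.adjoint Y).comp (ContinuousLinearMap.adjoint X) := by
      rw [hC, ContinuousLinearMap.adjoint_comp]
    have hAAz1 : (A (A z)).fst = (2:ℂ)⁻¹ • R x₁ + (4:ℂ)⁻¹ • P x₁ := by
      rw [hA1 (A z), hAz2, hRapp, hP, ← hb, hCadj, hC]
      simp only [map_add, map_smul, ContinuousLinearMap.add_apply,
        ContinuousLinearMap.comp_apply, map_mul, hconj]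
      match_scalars <;> (try ring1) <;> (field_simp; try ring1)
    have hAAz2 : (A (A z)).snd = 0 := by rw [hA2 (A z), hAz1]; simp
    have hAadj : ContinuousLinearMap.adjoint A = A := by
      rw [hA]
      show ContinuousLinearMap.adjoint
        ((2:ℂ)⁻¹ • (a • T + ContinuousLinearMap.adjoint (a • T))) = _
      rw [my_adjoint_smul, map_add, ContinuousLinearMap.adjoint_adjoint, h2c]
      rw [show reOp (a • T) = (2:ℂ)⁻¹ • (a • T + ContinuousLinearMap.adjoint (a • T)) from rfl]
      rw [add_comm]
    have hAnorm : ‖A‖ ≤ numRadius T := by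
      refine my_opNorm_le A hAadj hW0 ?_
      intro v hv
      have hAv : A v = (2:ℂ)⁻¹ • (a • T v
          + (starRingEnd ℂ) a • ContinuousLinearMap.adjoint T v) := by
        rw [hA]
        simp only [reOp, hTsa, ContinuousLinearMap.smul_apply, ContinuousLinearMap.add_apply]
      have hTT : (inner ℂ (ContinuousLinearMap.adjoint T v) v : ℂ)
          = (starRingEnd ℂ) (inner ℂ (T v) v) := by
        rw [ContinuousLinearMap.adjoint_inner_left]
        exact (inner_conj_symm v (T v)).symm
      have hInAv : (inner ℂ (A v) v : ℂ) = (2:ℂ)⁻¹ * ((starRingEnd ℂ) a * inner ℂ (T v) v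
          + a * (starRingEnd ℂ) (inner ℂ (T v) v)) := by
        rw [hAv, inner_smul_left, inner_add_left, inner_smul_left, inner_smul_left, hTT]
        simp only [Complex.conj_conj]
        rw [h2c]
      rw [hInAv]
      have htr : ‖(2:ℂ)⁻¹ * ((starRingEnd ℂ) a * inner ℂ (T v) v
          + a * (starRingEnd ℂ) (inner ℂ (T v) v))‖ ≤ ‖(inner ℂ (T v) v : ℂ)‖ := by
        rw [norm_mul]
        have h30 := norm_add_le ((starRingEnd ℂ) a * (inner ℂ (T v) v : ℂ))
          (a * (starRingEnd ℂ) (inner ℂ (T v) v : ℂ))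
        rw [norm_mul, norm_mul] at h30
        have hca : ‖(starRingEnd ℂ) a‖ = 1 := by
          rw [RCLike.norm_conj, ha1]
        have hna : ‖a‖ = 1 := by exact ha1
        have hct : ‖(starRingEnd ℂ) (inner ℂ (T v) v : ℂ)‖ = ‖(inner ℂ (T v) v : ℂ)‖ :=
          RCLike.norm_conj _
        rw [hca, hna, hct, one_mul] at h30
        have h31 : ‖((2:ℂ)⁻¹)‖ = 2⁻¹ := by norm_num
        rw [h31]
        linarith [norm_nonneg (inner ℂ (T v) v : ℂ)]
      exact htr.trans (hWel v hv)
    have hch : ‖A (A z)‖ ≤ (numRadius T)^2 := by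
      calc ‖A (A z)‖ ≤ ‖A‖ * ‖A z‖ := A.le_opNorm _
        _ ≤ ‖A‖ * (‖A‖ * ‖z‖) := mul_le_mul_of_nonneg_left (A.le_opNorm _) (norm_nonneg _)
        _ = ‖A‖ * ‖A‖ := by rw [hzn, mul_one]
        _ ≤ numRadius T * numRadius T := mul_le_mul hAnorm hAnorm (norm_nonneg _) hW0
        _ = (numRadius T)^2 := by ring
    have hsq : ‖A (A z)‖^2 ≤ (numRadius T)^4 := by nlinarith [norm_nonneg (A (A z))]
    have hnormAA : ‖A (A z)‖^2 = ‖(2:ℂ)⁻¹ • R x₁ + (4:ℂ)⁻¹ • P x₁‖^2 := by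
      rw [WithLp.prod_norm_sq_eq_of_L2, hAAz1, hAAz2]
      simp
    have hwsq : ‖(2:ℂ)⁻¹ • R x₁ + (4:ℂ)⁻¹ • P x₁‖^2
        = (1/4)*‖R x₁‖^2 + (1/16)*‖P x₁‖^2 + (1/4) * (inner ℂ (R x₁) (P x₁) : ℂ).re := by
      rw [norm_add_sq (𝕜 := ℂ), inner_smul_left, inner_smul_right, norm_smul, norm_smul]
      have h60 : (starRingEnd ℂ) ((2:ℂ)⁻¹) * ((4:ℂ)⁻¹ * (inner ℂ (R x₁) (P x₁) : ℂ))
          = (((8:ℝ)⁻¹ : ℝ) : ℂ) * inner ℂ (R x₁) (P x₁) := by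
        rw [h2c]
        push_cast
        ring
      rw [h60]
      have h61 : RCLike.re ((((8:ℝ)⁻¹ : ℝ) : ℂ) * (inner ℂ (R x₁) (P x₁) : ℂ))
          = (8:ℝ)⁻¹ * (inner ℂ (R x₁) (P x₁) : ℂ).re := by
        rw [RCLike.re_to_complex, Complex.re_ofReal_mul]
      rw [h61]
      have h62 : ‖((2:ℂ)⁻¹)‖ = 2⁻¹ := by norm_num
      have h63 : ‖((4:ℂ)⁻¹)‖ = 4⁻¹ := by norm_num
      rw [h62, h63]
      ring
    have hcross : (inner ℂ (R x₁) (P x₁) : ℂ).re = 2⁻¹ * ‖q‖ := by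
      have hq2 : q = ((‖q‖ : ℝ) : ℂ) * b := by
        rw [hbdef]; exact (Complex.norm_mul_exp_arg_mul_I q).symm
      have e1 : (inner ℂ (C x₁) (P x₁) : ℂ) = inner ℂ ((P.comp C) x₁) x₁ := by
        have h40 := ContinuousLinearMap.adjoint_inner_left P x₁ (C x₁)
        rw [hPadj] at h40
        rw [← h40]
        simp [hC, ContinuousLinearMap.comp_apply]
      have e2 : (inner ℂ (ContinuousLinearMap.adjoint C x₁) (P x₁) : ℂ)
          = (starRingEnd ℂ) (inner ℂ ((C.comp P) x₁) x₁) := by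
        rw [ContinuousLinearMap.adjoint_inner_left, ContinuousLinearMap.comp_apply]
        exact (inner_conj_symm x₁ (C (P x₁))).symm
      have hqsplit : q = inner ℂ ((C.comp P) x₁) x₁ + inner ℂ ((P.comp C) x₁) x₁ := by
        rw [hq, hQ]
        simp [ContinuousLinearMap.add_apply, inner_add_left]
      rw [hRapp, inner_smul_left, inner_add_left, inner_smul_left, inner_smul_left, e1, e2]
      rw [h2c, Complex.conj_conj]
      set s : ℂ := inner ℂ ((C.comp P) x₁) x₁ with hs
      set t : ℂ := inner ℂ ((P.comp C) x₁) x₁ with ht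
      have h50 : (starRingEnd ℂ) b * q = ((‖q‖ : ℝ) : ℂ) := by
        calc (starRingEnd ℂ) b * q
            = ((‖q‖ : ℝ) : ℂ) * (b * (starRingEnd ℂ) b) := by
              conv_lhs => rw [hq2]
              ring
          _ = ((‖q‖ : ℝ) : ℂ) := by rw [hbb, mul_one]
      have h51 : ((starRingEnd ℂ) b * t + b * (starRingEnd ℂ) s).re
          = ((starRingEnd ℂ) b * (s + t)).re := by
        have h52 : (b * (starRingEnd ℂ) s).re = ((starRingEnd ℂ) b * s).re := by
          calc (b * (starRingEnd ℂ) s).re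
              = ((starRingEnd ℂ) (b * (starRingEnd ℂ) s)).re := (Complex.conj_re _).symm
            _ = ((starRingEnd ℂ) b * s).re := by rw [map_mul, Complex.conj_conj]
        rw [mul_add, Complex.add_re, Complex.add_re, h52]
        ring
      have h53 : ((2:ℂ))⁻¹ = (((2:ℝ)⁻¹ : ℝ) : ℂ) := by norm_num
      rw [h53, Complex.re_ofReal_mul, h51, ← hqsplit, h50, Complex.ofReal_re]
    have hRge : cNum C ≤ ‖R x₁‖ := by
      have hle : cNum C ≤ sInf {r : ℝ | ∃ x : H₁, ‖x‖ = 1 ∧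
          r = ‖reOp (Complex.exp ((Complex.arg q : ℂ) * Complex.I) • C) x‖} :=
        ciInf_le ⟨0, by rintro r ⟨θ, rfl⟩; exact hF0 θ⟩ (Complex.arg q)
      refine hle.trans (csInf_le ⟨0, by rintro r ⟨x, hx, rfl⟩; exact norm_nonneg _⟩
        ⟨x₁, hx₁, ?_⟩)
      rw [hR, hbdef]
    have hcrawle : crawford Q ≤ ‖q‖ := by
      calc crawford Q ≤ ‖(inner ℂ (Q x₁) x₁ : ℂ)‖ :=
            csInf_le ⟨0, by rintro r ⟨x, hx, rfl⟩; exact norm_nonneg _⟩ ⟨x₁, hx₁, rfl⟩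
        _ = ‖q‖ := by rw [← hq]
    have hfin1 : (1/4) * (cNum C)^2 ≤ (1/4) * ‖R x₁‖^2 := by
      nlinarith [hcNum0, hRge, norm_nonneg (R x₁)]
    have htotal : (1/4)*‖R x₁‖^2 + (1/16)*‖P x₁‖^2 + (1/8) * ‖q‖
        ≤ (numRadius T)^4 := by
      rw [hnormAA, hwsq, hcross] at hsq
      linarith [hsq]
    linarith [hfin1, hcrawle, htotal, norm_nonneg q]
  -- assemble
  have hD0 : 0 ≤ (numRadius T)^4 - (1/4) * (cNum C)^2 - (1/8) * crawford Q := by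
    have := hmain e he
    nlinarith [norm_nonneg (P e)]
  set D : ℝ := (numRadius T)^4 - (1/4) * (cNum C)^2 - (1/8) * crawford Q with hD
  set M : ℝ := Real.sqrt (16 * D) with hM
  have hM0 : 0 ≤ M := Real.sqrt_nonneg _
  have hMP : ‖P‖ ≤ M := by
    refine P.opNorm_le_bound hM0 fun x => ?_
    rcases eq_or_ne x 0 with rfl | hx
    · simp
    have hnx : (0:ℝ) < ‖x‖ := norm_pos_iff.mpr hx
    set x' : H₁ := ((‖x‖⁻¹ : ℝ) : ℂ) • x with hx'
    have hx'1 : ‖x'‖ = 1 := by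
      rw [hx', norm_smul]
      simp [abs_of_nonneg (inv_nonneg.mpr hnx.le), inv_mul_cancel₀ hnx.ne']
    have h8 : ‖P x'‖^2 ≤ 16 * D := by
      have h7 := hmain x' hx'1
      rw [hD]
      nlinarith [h7]
    have h9 : ‖P x'‖ ≤ M := by
      rw [hM]
      have := Real.sqrt_le_sqrt h8
      rwa [Real.sqrt_sq (norm_nonneg _)] at this
    have h10 : ‖P x'‖ = ‖x‖⁻¹ * ‖P x‖ := by
      rw [hx', map_smul, norm_smul]
      simp [abs_of_nonneg (inv_nonneg.mpr hnx.le)]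
    rw [h10] at h9
    calc ‖P x‖ = ‖x‖ * (‖x‖⁻¹ * ‖P x‖) := by field_simp
      _ ≤ ‖x‖ * M := by nlinarith
      _ = M * ‖x‖ := by ring
  have hP2 : ‖P‖^2 ≤ 16 * D := by
    have h16 : (0:ℝ) ≤ 16 * D := by linarith
    have h21 : ‖P‖^2 ≤ M^2 := pow_le_pow_left₀ (norm_nonneg P) hMP 2
    have h22 : M^2 = 16 * D := by rw [hM]; exact Real.sq_sqrt h16
    linarith
  rw [ge_iff_le]
  rw [hD] at hP2
  linarith [hP2]
end
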